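/- arXiv:1511.06907 — 4 statements merged into one kernel-verified Lean document; each statement's English description precedes it below -/
import Mathlib

section
/- The set of skew-symmetric elements (RG)^- = {α ∈ RG : α^{σ*} = -α} is spanned over R by the union of the sets A₁ = {α x : x ∈ G_*, α ∈ R, α(1 + σ(x)) = 0} and A₂ = {x - σ(x) x^* : x ∈ G \ G_*}. -/
open Finsupp

/-- The generalized oriented map σ* on the group ring RG. -/
noncomputable def sigmaStar {R : Type} [CommRing R] {G : Type} [Group G]
    (inv : G → G) (σ : G →* Rˣ) (α : MonoidAlgebra R G) : MonoidAlgebra R G :=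
  α.coeff.sum fun x a => MonoidAlgebra.single (inv x) ((σ x : R) * a)

/-- The set of skew-symmetric elements of RG under σ*. -/
def skewSet {R : Type} [CommRing R] {G : Type} [Group G]
    (inv : G → G) (σ : G →* Rˣ) : Set (MonoidAlgebra R G) :=
  {α | sigmaStar inv σ α = -α}

section Aux

variable {R : Type} [CommRing R] {G : Type} [Group G]

lemma sigmaStar_apply (inv : G → G) (σ : G →* Rˣ) (hinv : ∀ x : G, inv (inv x) = x)
    (α : MonoidAlgebra R G) (x : G) :
    (sigmaStar inv σ α).coeff x = (σ (inv x) : R) * α.coeff (inv x) := by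
  classical
  unfold sigmaStar
  rw [MonoidAlgebra.coeff_finsuppSum, Finsupp.sum_apply, Finsupp.sum, Finset.sum_eq_single (inv x)]
  · rw [hinv, MonoidAlgebra.coeff_single, Finsupp.single_eq_same]
  · intro y _ hy
    rw [MonoidAlgebra.coeff_single]
    apply Finsupp.single_eq_of_ne'
    intro h; apply hy; rw [← h, hinv]
  · intro h
    rw [Finsupp.notMem_support_iff.mp h, mul_zero, MonoidAlgebra.single_zero,
      MonoidAlgebra.coeff_zero, Finsupp.coe_zero, Pi.zero_apply]

lemma mem_skew_iff (inv : G → G) (σ : G →* Rˣ) (hinv : ∀ x : G, inv (inv x) = x)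
    (α : MonoidAlgebra R G) :
    α ∈ skewSet inv σ ↔ ∀ y, (σ (inv y) : R) * α.coeff (inv y) = -α.coeff y := by
  unfold skewSet
  simp only [Set.mem_setOf_eq]
  rw [← MonoidAlgebra.coeff_inj, Finsupp.ext_iff]
  apply forall_congr'
  intro y
  rw [sigmaStar_apply inv σ hinv, MonoidAlgebra.coeff_neg, Finsupp.neg_apply]

end Aux

theorem stmt2 {R : Type} [CommRing R] (hchar : ringChar R ≠ 2) {G : Type} [Group G]
    (inv : G → G) (hmul : ∀ x y : G, inv (x * y) = inv y * inv x)
    (hinv : ∀ x : G, inv (inv x) = x) (σ : G →* Rˣ) (hnt : σ ≠ 1)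
    (hcompat : ∀ x : G, x * inv x ∈ σ.ker) :
    skewSet inv σ =
      ↑(Submodule.span R
        ({v : MonoidAlgebra R G | ∃ (x : G) (a : R), inv x = x ∧ a * (1 + (σ x : R)) = 0 ∧
            v = MonoidAlgebra.single x a} ∪
         {v : MonoidAlgebra R G | ∃ x : G, inv x ≠ x ∧
            v = MonoidAlgebra.single x (1 : R) - MonoidAlgebra.single (inv x) ((σ x : R))})) := by
  classical
  set SET : Set (MonoidAlgebra R G) :=
    ({v : MonoidAlgebra R G | ∃ (x : G) (a : R), inv x = x ∧ a * (1 + (σ x : R)) = 0 ∧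
        v = MonoidAlgebra.single x a} ∪
     {v : MonoidAlgebra R G | ∃ x : G, inv x ≠ x ∧
        v = MonoidAlgebra.single x (1 : R) - MonoidAlgebra.single (inv x) ((σ x : R))}) with hSET
  have hInj : Function.Injective inv := by
    intro a b h
    have := congrArg inv h
    rwa [hinv, hinv] at this
  have hunit' : ∀ x : G, (σ (inv x) : R) * (σ x : R) = 1 := by
    intro x
    have h : σ (inv x * x) = 1 := by
      have := hcompat (inv x)
      rwa [hinv] at this
    rw [map_mul] at h
    have h2 := congrArg Units.val h
    rw [Units.val_mul, Units.val_one] at h2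
    exact h2
  -- the pointwise skewness of the two kinds of generators
  have hP1 : ∀ (x : G) (a : R), inv x = x → a * (1 + (σ x : R)) = 0 →
      ∀ y, (σ (inv y) : R) * (MonoidAlgebra.single x a : MonoidAlgebra R G).coeff (inv y)
        = -(MonoidAlgebra.single x a : MonoidAlgebra R G).coeff y := by
    intro x a hx ha y
    by_cases hyx : y = x
    · subst hyx
      rw [hx, MonoidAlgebra.coeff_single, Finsupp.single_eq_same]
      linear_combination ha
    · have h1 : x ≠ y := fun h => hyx h.symm
      have h2 : x ≠ inv y := by
        intro h
        apply hyx
        have hy2 : inv x = y := by rw [h, hinv]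
        rw [← hy2, hx]
      simp only [MonoidAlgebra.coeff_single]
      rw [Finsupp.single_eq_of_ne' h1, Finsupp.single_eq_of_ne' h2, mul_zero, neg_zero]
  have hP2 : ∀ (x : G) (a : R), inv x ≠ x →
      ∀ y, (σ (inv y) : R) *
        ((MonoidAlgebra.single x a : MonoidAlgebra R G)
          - MonoidAlgebra.single (inv x) (a * (σ x : R))).coeff (inv y)
        = -((MonoidAlgebra.single x a : MonoidAlgebra R G)
          - MonoidAlgebra.single (inv x) (a * (σ x : R))).coeff y := by
    intro x a hx y
    rw [MonoidAlgebra.coeff_sub, Finsupp.sub_apply, Finsupp.sub_apply]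
    by_cases h1 : y = x
    · subst h1
      have e1 : (MonoidAlgebra.single y a : MonoidAlgebra R G).coeff (inv y) = 0 :=
        Finsupp.single_eq_of_ne' (fun h => hx h.symm)
      have e2 : (MonoidAlgebra.single (inv y) (a * (σ y : R)) : MonoidAlgebra R G).coeff (inv y)
          = a * (σ y : R) := Finsupp.single_eq_same
      have e3 : (MonoidAlgebra.single y a : MonoidAlgebra R G).coeff y = a := Finsupp.single_eq_same
      have e4 : (MonoidAlgebra.single (inv y) (a * (σ y : R)) : MonoidAlgebra R G).coeff y = 0 :=
        Finsupp.single_eq_of_ne' hx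
      rw [e1, e2, e3, e4]
      linear_combination (-a) * hunit' y
    · by_cases h2 : y = inv x
      · subst h2
        have e1 : (MonoidAlgebra.single x a : MonoidAlgebra R G).coeff (inv (inv x)) = a := by
          rw [hinv]; exact Finsupp.single_eq_same
        have e2 : (MonoidAlgebra.single (inv x) (a * (σ x : R)) : MonoidAlgebra R G).coeff (inv (inv x))
            = 0 := by
          rw [hinv]; exact Finsupp.single_eq_of_ne' hx
        have e3 : (MonoidAlgebra.single x a : MonoidAlgebra R G).coeff (inv x) = 0 :=
          Finsupp.single_eq_of_ne' (fun h => hx h.symm)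
        have e4 : (MonoidAlgebra.single (inv x) (a * (σ x : R)) : MonoidAlgebra R G).coeff (inv x)
            = a * (σ x : R) := Finsupp.single_eq_same
        rw [e1, e2, e3, e4, hinv]
        ring
      · simp only [MonoidAlgebra.coeff_single]
        have h3 : x ≠ y := fun h => h1 h.symm
        have h4 : inv x ≠ y := fun h => h2 h.symm
        have h5 : x ≠ inv y := by
          intro h
          exact h2 (by rw [h, hinv])
        have h6 : inv x ≠ inv y := fun h => h3 (hInj h)
        rw [Finsupp.single_eq_of_ne' h3, Finsupp.single_eq_of_ne' h4,
          Finsupp.single_eq_of_ne' h5, Finsupp.single_eq_of_ne' h6]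
        ring
  -- generators are pointwise skew
  have hK : ∀ α ∈ SET, ∀ y, (σ (inv y) : R) * α.coeff (inv y) = -α.coeff y := by
    intro α hα
    rcases hα with h | h
    · obtain ⟨x, a, hx, ha, rfl⟩ := h
      exact hP1 x a hx ha
    · obtain ⟨x, hx, rfl⟩ := h
      have := hP2 x 1 hx
      rw [one_mul] at this
      exact this
  have sub_skew : ∀ (u v : MonoidAlgebra R G),
      (∀ y, (σ (inv y) : R) * u.coeff (inv y) = -u.coeff y) →
      (∀ y, (σ (inv y) : R) * v.coeff (inv y) = -v.coeff y) →
      ∀ y, (σ (inv y) : R) * (u - v).coeff (inv y) = -(u - v).coeff y := by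
    intro u v hu hv y
    rw [MonoidAlgebra.coeff_sub, Finsupp.sub_apply, Finsupp.sub_apply]
    linear_combination hu y - hv y
  -- key induction for the other inclusion
  have key : ∀ (n : ℕ) (α : MonoidAlgebra R G), α.coeff.support.card ≤ n →
      (∀ y, (σ (inv y) : R) * α.coeff (inv y) = -α.coeff y) → α ∈ Submodule.span R SET := by
    intro n
    induction n with
    | zero =>
      intro α hcard _
      have : α = 0 := by
        rw [← MonoidAlgebra.coeff_eq_zero, ← Finsupp.support_eq_empty, ← Finset.card_eq_zero]
        omega
      rw [this]; exact Submodule.zero_mem _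
    | succ n ih =>
      intro α hcard hα
      by_cases h0 : α = 0
      · rw [h0]; exact Submodule.zero_mem _
      obtain ⟨x, hx⟩ := Finsupp.support_nonempty_iff.mpr (fun h => h0 (MonoidAlgebra.coeff_eq_zero.mp h))
      by_cases hfix : inv x = x
      · -- fixed point case
        have hax : α.coeff x * (1 + (σ x : R)) = 0 := by
          have h := hα x
          rw [hfix] at h
          linear_combination h
        set g : MonoidAlgebra R G := MonoidAlgebra.single x (α.coeff x) with hg
        have hgspan : g ∈ Submodule.span R SET := by
          apply Submodule.subset_span
          exact Or.inl ⟨x, α.coeff x, hfix, hax, rfl⟩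
        set β : MonoidAlgebra R G := α - g with hβ
        have hgskew : ∀ y, (σ (inv y) : R) * g.coeff (inv y) = -g.coeff y := by
          rw [hg]; exact hP1 x (α.coeff x) hfix hax
        have hβskew : ∀ y, (σ (inv y) : R) * β.coeff (inv y) = -β.coeff y :=
          sub_skew α g hα hgskew
        have hβsupp : β.coeff.support ⊆ α.coeff.support.erase x := by
          intro y hy
          rw [Finsupp.mem_support_iff] at hy
          have hyx : y ≠ x := by
            intro h; subst h
            apply hy
            rw [hβ, MonoidAlgebra.coeff_sub, Finsupp.sub_apply, hg, MonoidAlgebra.coeff_single, Finsupp.single_eq_same, sub_self]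
          rw [Finset.mem_erase, Finsupp.mem_support_iff]
          refine ⟨hyx, fun h => hy ?_⟩
          rw [hβ, MonoidAlgebra.coeff_sub, Finsupp.sub_apply, hg, MonoidAlgebra.coeff_single, Finsupp.single_eq_of_ne' (Ne.symm hyx), h, sub_zero]
        have hβcard : β.coeff.support.card ≤ n := by
          have h1 := Finset.card_le_card hβsupp
          have h2 : (α.coeff.support.erase x).card = α.coeff.support.card - 1 :=
            Finset.card_erase_of_mem hx
          have h3 : 1 ≤ α.coeff.support.card := Finset.card_pos.mpr ⟨x, hx⟩
          omega
        have hsum : α = β + g := by rw [hβ]; abel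
        rw [hsum]
        exact Submodule.add_mem _ (ih β hβcard hβskew) hgspan
      · -- non-fixed case
        set g : MonoidAlgebra R G :=
          MonoidAlgebra.single x (α.coeff x) - MonoidAlgebra.single (inv x) (α.coeff x * (σ x : R)) with hg
        have hgspan : g ∈ Submodule.span R SET := by
          have hv : (MonoidAlgebra.single x (1 : R) - MonoidAlgebra.single (inv x) ((σ x : R))
              : MonoidAlgebra R G) ∈ Submodule.span R SET :=
            Submodule.subset_span (Or.inr ⟨x, hfix, rfl⟩)
          have hsm := Submodule.smul_mem _ (α.coeff x) hv
          have heq : α.coeff x • (MonoidAlgebra.single x (1 : R) - MonoidAlgebra.single (inv x) ((σ x : R))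
              : MonoidAlgebra R G) = g := by
            rw [smul_sub, MonoidAlgebra.smul_single, MonoidAlgebra.smul_single, hg,
              smul_eq_mul, mul_one, smul_eq_mul]
          rwa [heq] at hsm
        set β : MonoidAlgebra R G := α - g with hβ
        have hgskew : ∀ y, (σ (inv y) : R) * g.coeff (inv y) = -g.coeff y := by
          rw [hg]; exact hP2 x (α.coeff x) hfix
        have hβskew : ∀ y, (σ (inv y) : R) * β.coeff (inv y) = -β.coeff y :=
          sub_skew α g hα hgskew
        have hgx : g.coeff x = α.coeff x := by
          rw [hg, MonoidAlgebra.coeff_sub, Finsupp.sub_apply, MonoidAlgebra.coeff_single, MonoidAlgebra.coeff_single, Finsupp.single_eq_same,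
            Finsupp.single_eq_of_ne' hfix, sub_zero]
        have hgix : g.coeff (inv x) = -(α.coeff x * (σ x : R)) := by
          rw [hg, MonoidAlgebra.coeff_sub, Finsupp.sub_apply, MonoidAlgebra.coeff_single, MonoidAlgebra.coeff_single, Finsupp.single_eq_of_ne' (fun h => hfix h.symm),
            Finsupp.single_eq_same, zero_sub]
        have hβx : β.coeff x = 0 := by
          rw [hβ, MonoidAlgebra.coeff_sub, Finsupp.sub_apply, hgx, sub_self]
        have hβix : β.coeff (inv x) = 0 := by
          have h := hα x
          rw [hβ, MonoidAlgebra.coeff_sub, Finsupp.sub_apply, hgix]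
          linear_combination (σ x : R) * h - (α.coeff (inv x)) * hunit' x
        have hβsupp : β.coeff.support ⊆ α.coeff.support.erase x := by
          intro y hy
          rw [Finsupp.mem_support_iff] at hy
          have hyx : y ≠ x := by
            intro h; subst h; exact hy hβx
          rw [Finset.mem_erase, Finsupp.mem_support_iff]
          refine ⟨hyx, fun h => hy ?_⟩
          by_cases hy2 : y = inv x
          · subst hy2; exact hβix
          · have hgy : g.coeff y = 0 := by
              rw [hg, MonoidAlgebra.coeff_sub, Finsupp.sub_apply, MonoidAlgebra.coeff_single, MonoidAlgebra.coeff_single, Finsupp.single_eq_of_ne' (Ne.symm hyx),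
                Finsupp.single_eq_of_ne' (fun h' => hy2 h'.symm), sub_zero]
            rw [hβ, MonoidAlgebra.coeff_sub, Finsupp.sub_apply, h, hgy, sub_zero]
        have hβcard : β.coeff.support.card ≤ n := by
          have h1 := Finset.card_le_card hβsupp
          have h2 : (α.coeff.support.erase x).card = α.coeff.support.card - 1 :=
            Finset.card_erase_of_mem hx
          have h3 : 1 ≤ α.coeff.support.card := Finset.card_pos.mpr ⟨x, hx⟩
          omega
        have hsum : α = β + g := by rw [hβ]; abel
        rw [hsum]
        exact Submodule.add_mem _ (ih β hβcard hβskew) hgspan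
  -- conclude
  ext α
  constructor
  · intro hα
    rw [mem_skew_iff inv σ hinv] at hα
    exact key α.coeff.support.card α le_rfl hα
  · intro hα
    rw [SetLike.mem_coe] at hα
    rw [mem_skew_iff inv σ hinv]
    induction hα using Submodule.span_induction with
    | mem v hv => exact hK v hv
    | zero => intro y; simp
    | add u v _ _ hu hv =>
      intro y
      rw [MonoidAlgebra.coeff_add, Finsupp.add_apply, Finsupp.add_apply]
      linear_combination hu y + hv y
    | smul c u _ hu =>
      intro y
      rw [MonoidAlgebra.coeff_smul, Finsupp.smul_apply, Finsupp.smul_apply, smul_eq_mul, smul_eq_mul]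
      linear_combination c * hu y
end

section
/- If the set of skew-symmetric elements (RG)^- is anticommutative (i.e., αβ + βα = 0 for all α, β ∈ (RG)^-), then for every x ∈ G with x^* = x, one has σ(x) ≠ -1. -/
open Finsupp

theorem stmt4 {R : Type} [CommRing R] (hchar : ringChar R ≠ 2) {G : Type} [Group G]
    (inv : G → G) (hmul : ∀ x y : G, inv (x * y) = inv y * inv x)
    (hinv : ∀ x : G, inv (inv x) = x) (σ : G →* Rˣ) (hnt : σ ≠ 1)
    (hcompat : ∀ x : G, x * inv x ∈ σ.ker)
    (hanti : ∀ α ∈ skewSet inv σ, ∀ β ∈ skewSet inv σ, α * β + β * α = 0) :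
    ∀ x : G, inv x = x → (σ x : R) ≠ -1 := by
  intro x hx hσ
  -- α = single x 1 is skew
  have hskew : (MonoidAlgebra.single x 1 : MonoidAlgebra R G) ∈ skewSet inv σ := by
    show sigmaStar inv σ _ = _
    unfold sigmaStar
    rw [MonoidAlgebra.coeff_single, Finsupp.sum_single_index (by simp)]
    rw [hx, hσ]
    rw [neg_one_mul, ← MonoidAlgebra.coeff_inj, MonoidAlgebra.coeff_single]
    simp
  have h := hanti _ hskew _ hskew
  rw [MonoidAlgebra.single_mul_single] at h
  have h2 : (2 : R) = 0 := by
    have h' : (Finsupp.single (x*x) (1*1) + Finsupp.single (x*x) (1*1) : G →₀ R) = 0 := by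
      have := congrArg MonoidAlgebra.coeff h
      rwa [MonoidAlgebra.coeff_add, MonoidAlgebra.coeff_single, MonoidAlgebra.coeff_zero] at this
    have := DFunLike.congr_fun h' (x*x)
    rw [show (2:R) = 1+1 from one_add_one_eq_two.symm]; simpa using this
  have hdvd : ringChar R ∣ 2 := ringChar.dvd (by exact_mod_cast h2)
  rcases (Nat.dvd_prime Nat.prime_two).mp hdvd with h | h
  · -- ringChar = 1 : R is subsingleton, so σ = 1
    have h1 : (1 : R) = 0 := by
      have := ringChar.spec R 1
      rw [h] at this
      simpa using this.mpr dvd_rfl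
    haveI : Subsingleton R := subsingleton_of_zero_eq_one h1.symm
    exact hnt (by ext g; exact Subsingleton.elim _ _)
  · exact hchar h
end

section
/- If (RG)^- is anticommutative, then for x, y ∈ G with x^* ≠ x and y^* ≠ y such that xy = yx, one has xy = x^*y^* = y^*x^*, xy^* = y^*x, x^*y = yx^*, and 2(1 + σ(xy)) = 0 = 2(σ(x) + σ(y)) in R. -/
open Finsupp

section helpers

set_option linter.unusedSectionVars false

variable {R : Type} [CommRing R] {G : Type} [Group G]

lemma MA_add_apply (f g : MonoidAlgebra R G) (t : G) : (f + g).coeff t = f.coeff t + g.coeff t :=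
  Finsupp.add_apply f.coeff g.coeff t

lemma MA_sub_apply (f g : MonoidAlgebra R G) (t : G) : (f - g).coeff t = f.coeff t - g.coeff t :=
  Finsupp.sub_apply f.coeff g.coeff t

lemma coeff_zero {f : MonoidAlgebra R G} (h : f = 0) (t : G) : f.coeff t = 0 := by rw [h]; rfl

lemma expand_mul (g₁ g₂ h₁ h₂ : G) (r₁ r₂ s₁ s₂ : R) :
    (MonoidAlgebra.single g₁ r₁ - MonoidAlgebra.single g₂ r₂) *
      (MonoidAlgebra.single h₁ s₁ - MonoidAlgebra.single h₂ s₂) =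
    MonoidAlgebra.single (g₁*h₁) (r₁*s₁) - MonoidAlgebra.single (g₁*h₂) (r₁*s₂)
      - MonoidAlgebra.single (g₂*h₁) (r₂*s₁)
      + (MonoidAlgebra.single (g₂*h₂) (r₂*s₂) : MonoidAlgebra R G) := by
  rw [sub_mul, mul_sub, mul_sub, MonoidAlgebra.single_mul_single, MonoidAlgebra.single_mul_single,
    MonoidAlgebra.single_mul_single, MonoidAlgebra.single_mul_single]
  abel

lemma expand_mul_single (g₁ g₂ h : G) (r₁ r₂ s : R) :
    (MonoidAlgebra.single g₁ r₁ - MonoidAlgebra.single g₂ r₂) * MonoidAlgebra.single h s =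
    MonoidAlgebra.single (g₁*h) (r₁*s)
      - (MonoidAlgebra.single (g₂*h) (r₂*s) : MonoidAlgebra R G) := by
  rw [sub_mul, MonoidAlgebra.single_mul_single, MonoidAlgebra.single_mul_single]

lemma expand_single_mul (g : G) (h₁ h₂ : G) (r s₁ s₂ : R) :
    MonoidAlgebra.single g r * (MonoidAlgebra.single h₁ s₁ - MonoidAlgebra.single h₂ s₂) =
    MonoidAlgebra.single (g*h₁) (r*s₁)
      - (MonoidAlgebra.single (g*h₂) (r*s₂) : MonoidAlgebra R G) := by
  rw [mul_sub, MonoidAlgebra.single_mul_single, MonoidAlgebra.single_mul_single]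

variable (inv : G → G) (σ : G →* Rˣ)

lemma sigmaStar_single (g : G) (r : R) :
    sigmaStar inv σ (MonoidAlgebra.single g r)
      = MonoidAlgebra.single (inv g) ((σ g : R) * r) :=
  by unfold sigmaStar; rw [MonoidAlgebra.coeff_single]; exact Finsupp.sum_single_index (by simp)

lemma sigmaStar_sub (α β : MonoidAlgebra R G) :
    sigmaStar inv σ (α - β) = sigmaStar inv σ α - sigmaStar inv σ β :=
  by unfold sigmaStar; rw [MonoidAlgebra.coeff_sub]
     exact Finsupp.sum_sub_index (fun a b₁ b₂ => by rw [mul_sub, MonoidAlgebra.single_sub])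

lemma sigma_inv_mul (hinv : ∀ g : G, inv (inv g) = g)
    (hcompat : ∀ g : G, g * inv g ∈ σ.ker) (g : G) :
    ((σ (inv g) : R)) * (σ g : R) = 1 := by
  have h := hcompat (inv g)
  rw [MonoidHom.mem_ker, hinv, map_mul] at h
  simpa using congrArg Units.val h

lemma alpha_mem (hinv : ∀ g : G, inv (inv g) = g)
    (hcompat : ∀ g : G, g * inv g ∈ σ.ker) (g : G) :
    (MonoidAlgebra.single g 1 - MonoidAlgebra.single (inv g) ((σ g : R))) ∈ skewSet inv σ := by
  show sigmaStar inv σ _ = _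
  rw [sigmaStar_sub, sigmaStar_single, sigmaStar_single, hinv, mul_one,
    sigma_inv_mul inv σ hinv hcompat g]
  exact (neg_sub _ _).symm

lemma beta_mem (s : G) (hs : inv s = s) (h2 : (σ s : R) * 2 = -2) :
    (MonoidAlgebra.single s (2:R)) ∈ skewSet inv σ := by
  show sigmaStar inv σ _ = _
  rw [sigmaStar_single, hs, h2]
  exact MonoidAlgebra.single_neg s 2

lemma sq_lemma (two_ne : (2:R) ≠ 0)
    (hinv : ∀ g : G, inv (inv g) = g)
    (hcompat : ∀ g : G, g * inv g ∈ σ.ker)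
    (hanti : ∀ α ∈ skewSet inv σ, ∀ β ∈ skewSet inv σ, α * β + β * α = 0)
    (g : G) (hg : inv g ≠ g) :
    g * inv g = inv g * g ∧ (2:R) + 2 * ((σ g : R) * (σ g : R)) = 0 := by
  classical
  have hα := alpha_mem inv σ hinv hcompat g
  have E := hanti _ hα _ hα
  rw [expand_mul] at E
  have n1 : ¬(g * g = g * inv g) := fun h => hg (mul_left_cancel h).symm
  have n4 : ¬(inv g * inv g = g * inv g) := fun h => hg (mul_right_cancel h)
  have n2 : ¬(g * inv g = g * g) := fun h => hg (mul_left_cancel h)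
  have n3 : ¬(inv g * g = g * g) := fun h => hg (mul_right_cancel h)
  constructor
  · by_contra hc
    have e := coeff_zero E (g * inv g)
    simp only [MA_add_apply, MA_sub_apply, MonoidAlgebra.single_apply] at e
    simp only [if_true, if_neg n1, if_neg (fun h : inv g * g = g * inv g => hc h.symm),
      if_neg n4] at e
    have h2 : (σ g : R) * 2 = 0 := by linear_combination -e
    exact two_ne ((Units.mul_right_eq_zero (σ g)).mp h2)
  · by_cases hδ : inv g * inv g = g * g
    · have e := coeff_zero E (g * g)
      simp only [MA_add_apply, MA_sub_apply, MonoidAlgebra.single_apply] at e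
      simp only [if_true, if_neg n2, if_neg n3, if_pos hδ] at e
      linear_combination e
    · have e := coeff_zero E (g * g)
      simp only [MA_add_apply, MA_sub_apply, MonoidAlgebra.single_apply] at e
      simp only [if_true, if_neg n2, if_neg n3, if_neg hδ] at e
      exact absurd (by linear_combination e : (2:R) = 0) two_ne

end helpers

theorem stmt8 {R : Type} [CommRing R] (hchar : ringChar R ≠ 2) {G : Type} [Group G]
    (inv : G → G) (hmul : ∀ x y : G, inv (x * y) = inv y * inv x)
    (hinv : ∀ x : G, inv (inv x) = x) (σ : G →* Rˣ) (hnt : σ ≠ 1)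
    (hcompat : ∀ x : G, x * inv x ∈ σ.ker)
    (hanti : ∀ α ∈ skewSet inv σ, ∀ β ∈ skewSet inv σ, α * β + β * α = 0)
    (x y : G) (hx : inv x ≠ x) (hy : inv y ≠ y) (hcomm : x * y = y * x) :
    x * y = inv x * inv y ∧ inv x * inv y = inv y * inv x ∧
    x * inv y = inv y * x ∧ inv x * y = y * inv x ∧
    2 * (1 + (σ (x * y) : R)) = 0 ∧ 2 * ((σ x : R) + (σ y : R)) = 0 := by
  classical
  have two_ne : (2:R) ≠ 0 := by
    intro h
    rcases (Nat.dvd_prime Nat.prime_two).mp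
        (ringChar.dvd (show ((2:ℕ) : R) = 0 by exact_mod_cast h)) with h1 | h2
    · have hc : CharP R 1 := ringChar.eq_iff.mp h1
      have hsub : Subsingleton R := CharP.CharOne.subsingleton
      exact hnt (MonoidHom.ext fun g => Units.ext (Subsingleton.elim _ _))
    · exact hchar h2
  have hcomm' : inv x * inv y = inv y * inv x := by
    rw [← hmul y x, ← hmul x y, hcomm]
  obtain ⟨hcx, keyx⟩ := sq_lemma inv σ two_ne hinv hcompat hanti x hx
  obtain ⟨hcy, -⟩ := sq_lemma inv σ two_ne hinv hcompat hanti y hy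
  have hα := alpha_mem inv σ hinv hcompat x
  have hβ := alpha_mem inv σ hinv hcompat y
  have E1 := hanti _ hα _ hβ
  rw [expand_mul, expand_mul] at E1
  have n2 : ¬(x * inv y = x * y) := fun h => hy (mul_left_cancel h)
  have n3 : ¬(inv x * y = x * y) := fun h => hx (mul_right_cancel h)
  have n6 : ¬(y * inv x = x * y) := fun h => hx (by
    rw [hcomm] at h; exact mul_left_cancel h)
  have n7 : ¬(inv y * x = x * y) := fun h => hy (by
    rw [hcomm] at h; exact mul_right_cancel h)
  have c1 : x * y = inv x * inv y := by
    by_contra hδ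
    have hδ' : ¬(inv x * inv y = x * y) := fun h => hδ h.symm
    have hδ'' : ¬(inv y * inv x = x * y) := fun h => hδ' (hcomm'.trans h)
    have e := coeff_zero E1 (x * y)
    simp only [MA_add_apply, MA_sub_apply, MonoidAlgebra.single_apply] at e
    simp only [if_true, if_neg n2, if_neg n3, if_neg hδ', if_pos hcomm.symm, if_neg n6,
      if_neg n7, if_neg hδ''] at e
    exact two_ne (by linear_combination e)
  have key : (2:R) + 2 * ((σ x : R) * (σ y : R)) = 0 := by
    have e := coeff_zero E1 (x * y)
    simp only [MA_add_apply, MA_sub_apply, MonoidAlgebra.single_apply] at e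
    simp only [if_true, if_neg n2, if_neg n3, if_pos c1.symm, if_pos hcomm.symm, if_neg n6,
      if_neg n7, if_pos (hcomm'.symm.trans c1.symm)] at e
    linear_combination e
  have hsxy : (σ (x*y) : R) = (σ x : R) * (σ y : R) := by rw [map_mul]; rfl
  have c5 : 2 * (1 + (σ (x*y) : R)) = 0 := by rw [hsxy]; linear_combination key
  have hs : inv (x*y) = x*y := by rw [hmul x y, ← hcomm', ← c1]
  have hγ := beta_mem inv σ (x*y) hs (by rw [hsxy]; linear_combination key)
  -- E2 : interactions of x with x*y
  have E2 := hanti _ hα _ hγ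
  rw [expand_mul_single, expand_single_mul] at E2
  have hsx : (x*y)*x = x*(x*y) := by rw [mul_assoc, ← hcomm]
  have nB : ¬(inv x * (x*y) = x * (x*y)) := fun h => hx (mul_right_cancel h)
  have nD : ¬((x*y) * inv x = x * (x*y)) := fun h => hx (by
    rw [mul_assoc] at h
    have h2 := mul_left_cancel h
    rw [hcomm] at h2
    exact mul_left_cancel h2)
  have h4 : (4:R) = 0 := by
    have e := coeff_zero E2 (x*(x*y))
    simp only [MA_add_apply, MA_sub_apply, MonoidAlgebra.single_apply] at e
    simp only [if_true, if_neg nB, if_pos hsx, if_neg nD] at e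
    linear_combination e
  have nA2 : ¬(x * (x*y) = inv x * (x*y)) := fun h => hx (mul_right_cancel h).symm
  have nC2 : ¬((x*y)*x = inv x * (x*y)) := fun h =>
    hx (mul_right_cancel (hsx.symm.trans h)).symm
  have c4 : inv x * y = y * inv x := by
    by_cases hδ : (x*y) * inv x = inv x * (x*y)
    · have h1 : x * (y * inv x) = x * (inv x * y) :=
        calc x * (y * inv x) = (x * y) * inv x := (mul_assoc _ _ _).symm
          _ = inv x * (x * y) := hδ
          _ = (inv x * x) * y := (mul_assoc _ _ _).symm
          _ = (x * inv x) * y := by rw [hcx]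
          _ = x * (inv x * y) := mul_assoc _ _ _
      exact (mul_left_cancel h1).symm
    · exfalso
      have e := coeff_zero E2 (inv x * (x*y))
      simp only [MA_add_apply, MA_sub_apply, MonoidAlgebra.single_apply] at e
      simp only [if_true, if_neg nA2, if_neg nC2, if_neg hδ] at e
      have h2 : (σ x : R) * 2 = 0 := by linear_combination -e
      exact two_ne ((Units.mul_right_eq_zero (σ x)).mp h2)
  -- E3 : interactions of y with x*y
  have E3 := hanti _ hβ _ hγ
  rw [expand_mul_single, expand_single_mul] at E3
  have hsy : (x*y)*y = y*(x*y) := by rw [hcomm, mul_assoc, hcomm]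
  have nA3 : ¬(y * (x*y) = inv y * (x*y)) := fun h => hy (mul_right_cancel h).symm
  have nC3 : ¬((x*y)*y = inv y * (x*y)) := fun h =>
    hy (mul_right_cancel (hsy.symm.trans h)).symm
  have c3 : x * inv y = inv y * x := by
    by_cases hδ : (x*y) * inv y = inv y * (x*y)
    · have h1 : (x * inv y) * y = (inv y * x) * y :=
        calc (x * inv y) * y = x * (inv y * y) := mul_assoc _ _ _
          _ = x * (y * inv y) := by rw [hcy]
          _ = (x * y) * inv y := (mul_assoc _ _ _).symm
          _ = inv y * (x * y) := hδ
          _ = (inv y * x) * y := (mul_assoc _ _ _).symm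
      exact mul_right_cancel h1
    · exfalso
      have e := coeff_zero E3 (inv y * (x*y))
      simp only [MA_add_apply, MA_sub_apply, MonoidAlgebra.single_apply] at e
      simp only [if_true, if_neg nA3, if_neg nC3, if_neg hδ] at e
      have h2 : (σ y : R) * 2 = 0 := by linear_combination -e
      exact two_ne ((Units.mul_right_eq_zero (σ y)).mp h2)
  have c6 : 2 * ((σ x : R) + (σ y : R)) = 0 := by
    linear_combination (σ x : R) * key - (σ y : R) * keyx + (σ y : R) * h4
  exact ⟨c1, hcomm', c3, c4, c5, c6⟩
end

section
/- If (RG)^- is anticommutative, then for all x, y ∈ G_* and α, β ∈ R with αx, βy ∈ (RG)^-: (i) xy = yx if and only if xy ∈ G_*; (ii) if xy ≠ yx then αβ = 0, and if xy = yx then 2αβ = 0. -/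
open Finsupp

theorem stmt14 {R : Type} [CommRing R] (hchar : ringChar R ≠ 2) {G : Type} [Group G]
    (inv : G → G) (hmul : ∀ x y : G, inv (x * y) = inv y * inv x)
    (hinv : ∀ x : G, inv (inv x) = x) (σ : G →* Rˣ) (hnt : σ ≠ 1)
    (hcompat : ∀ x : G, x * inv x ∈ σ.ker)
    (hanti : ∀ α ∈ skewSet inv σ, ∀ β ∈ skewSet inv σ, α * β + β * α = 0)
    (x y : G) (hx : inv x = x) (hy : inv y = y) (α β : R)
    (hα : (MonoidAlgebra.single x α : MonoidAlgebra R G) ∈ skewSet inv σ)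
    (hβ : (MonoidAlgebra.single y β : MonoidAlgebra R G) ∈ skewSet inv σ) :
    (x * y = y * x ↔ inv (x * y) = x * y) ∧
    (x * y ≠ y * x → α * β = 0) ∧ (x * y = y * x → 2 * (α * β) = 0) := by
  have key := hanti _ hα _ hβ
  rw [MonoidAlgebra.single_mul_single, MonoidAlgebra.single_mul_single] at key
  refine ⟨?_, ?_, ?_⟩
  · rw [hmul, hx, hy]
    exact ⟨fun h => h.symm, fun h => h.symm⟩
  · intro hne
    have key2 : (Finsupp.single (x * y) (α * β) : G →₀ R) + Finsupp.single (y * x) (β * α) = 0 := by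
        have := congrArg MonoidAlgebra.coeff key
        rw [MonoidAlgebra.coeff_add, MonoidAlgebra.coeff_single, MonoidAlgebra.coeff_single,
          MonoidAlgebra.coeff_zero] at this
        exact this
    have h2 := Finsupp.ext_iff.mp key2 (x * y)
    rw [Finsupp.add_apply, Finsupp.single_eq_same,
      Finsupp.single_eq_of_ne (fun hh : x * y = y * x => hne hh), add_zero,
      Finsupp.coe_zero, Pi.zero_apply] at h2
    exact h2
  · intro heq
    have key2 : (Finsupp.single (x * y) (α * β) : G →₀ R) + Finsupp.single (y * x) (β * α) = 0 := by
        have := congrArg MonoidAlgebra.coeff key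
        rw [MonoidAlgebra.coeff_add, MonoidAlgebra.coeff_single, MonoidAlgebra.coeff_single,
          MonoidAlgebra.coeff_zero] at this
        exact this
    rw [← heq] at key2
    have h2 := Finsupp.ext_iff.mp key2 (x * y)
    rw [Finsupp.add_apply, Finsupp.single_eq_same, Finsupp.single_eq_same,
      Finsupp.coe_zero, Pi.zero_apply, mul_comm β α] at h2
    linear_combination h2
end
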